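/- Fix integers m ≥ 1 and d ≥ 1, and a subset Γ ⊆ ℕ. Define the formal power series η(t) = Σ_{k∈Γ} t^{⌈k/d⌉} and χ(t) = Σ_{k∈Γ} t^{⌈mk/d⌉}, and set ψ(t) := χ(t)·(1−t^m)/(1−t) = χ(t)·(1 + t + ⋯ + t^{m−1}). Then η(t^m) = (1/m)·Σ_{ξ^m = 1} ψ(ξt), where the sum is over all m-th roots of unity ξ. -/

import Mathlib

open PowerSeries

lemma div_eq_iff_aux {d : ℕ} (hd : 0 < d) (n q : ℕ) :
    n / d = q ↔ (q*d ≤ n ∧ n < (q+1)*d) := by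
  rw [le_antisymm_iff, ← Nat.lt_succ_iff, Nat.div_lt_iff_lt_mul hd, Nat.le_div_iff_mul_le hd,
    Nat.succ_eq_add_one]
  exact and_comm

lemma key (m d q k : ℕ) (hm : 1 ≤ m) (hd : 1 ≤ d) :
    (k + d - 1) / d = q ↔
      ((m*k + d - 1)/d ≤ m*q ∧ m*q < (m*k + d - 1)/d + m) := by
  have hd0 : 0 < d := hd
  rw [div_eq_iff_aux hd0]
  have h2 : (m*k + d - 1)/d ≤ m*q ↔ m*k + d - 1 < (m*q+1)*d := by
    rw [← Nat.lt_succ_iff, Nat.div_lt_iff_lt_mul hd0, Nat.succ_eq_add_one]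
  rw [h2]
  rcases Nat.eq_zero_or_pos q with rfl | hq
  · have hA : (0:ℕ)*d = 0 := by ring
    have hB : ((0:ℕ)+1)*d = d := by ring
    have hC : (m*0+1)*d = d := by ring
    have hD : m*0 = 0 := by ring
    rw [hA, hB, hC, hD]
    have hmk : m * k = 0 ↔ k = 0 := by
      constructor
      · intro h
        rcases Nat.mul_eq_zero.mp h with h | h
        · omega
        · exact h
      · rintro rfl; ring
    generalize (m * k + d - 1) / d = n
    omega
  · obtain ⟨q', rfl⟩ : ∃ q', q = q' + 1 := ⟨q - 1, by omega⟩
    have h3 : m*(q'+1) < (m*k + d - 1)/d + m ↔ (m*q'+1)*d ≤ m*k + d - 1 := by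
      rw [Nat.mul_succ, Nat.add_lt_add_iff_right, Nat.lt_iff_add_one_le,
        Nat.le_div_iff_mul_le hd0]
    rw [h3]
    have e1 : (q'+1)*d = q'*d + d := by ring
    have e2 : (q'+1+1)*d = q'*d + d + d := by ring
    have e3 : (m*(q'+1)+1)*d = m*(q'*d) + m*d + d := by ring
    have e4 : (m*q'+1)*d = m*(q'*d) + d := by ring
    have hm0 : 0 < m := hm
    have b1 : q'*d < k ↔ m*(q'*d) < m*k := (Nat.mul_lt_mul_left hm0).symm
    have b2 : k ≤ q'*d + d ↔ m*k ≤ m*(q'*d) + m*d := by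
      rw [← Nat.mul_add]
      exact (mul_le_mul_iff_right₀ hm0).symm
    rw [e1, e2, e3, e4]
    omega

lemma rootsum (m N : ℕ) (hm : 1 ≤ m) :
    ((Polynomial.nthRoots m (1:ℂ)).map fun ξ => ξ ^ N).sum
      = if m ∣ N then (m:ℂ) else 0 := by
  have hmne : m ≠ 0 := by omega
  have hζ := Complex.isPrimitiveRoot_exp m hmne
  set ζ := Complex.exp (2 * Real.pi * Complex.I / m) with hζdef
  rw [hζ.nthRoots_eq (one_pow m), Multiset.map_map]
  have h1 : ((Multiset.range m).map ((fun ξ => ξ ^ N) ∘ (ζ ^ · * 1))).sum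
      = ∑ i ∈ Finset.range m, (ζ ^ N) ^ i := by
    rw [Finset.sum_congr rfl (fun i _ => by
      show (ζ^N)^i = ((fun ξ => ξ ^ N) ∘ (ζ ^ · * 1)) i
      simp [Function.comp, mul_one, ← pow_mul, mul_comm])]
    rfl
  rw [h1]
  by_cases hdvd : m ∣ N
  · rw [if_pos hdvd]
    have : ζ ^ N = 1 := (hζ.pow_eq_one_iff_dvd N).mpr hdvd
    simp [this]
  · rw [if_neg hdvd]
    have hne : ζ ^ N ≠ 1 := fun h => hdvd ((hζ.pow_eq_one_iff_dvd N).mp h)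
    rw [geom_sum_eq hne]
    have : (ζ ^ N) ^ m = 1 := by
      rw [← pow_mul, mul_comm, pow_mul, hζ.pow_eq_one, one_pow]
    rw [this]
    simp

lemma count_split (m d q : ℕ) (hm : 1 ≤ m) (hd : 1 ≤ d) (Γ : Set ℕ) :
    Nat.card {k : ℕ // k ∈ Γ ∧ (k + d - 1)/d = q} =
      ∑ n ∈ Finset.Ico (m*q+1-m) (m*q+1), Nat.card {k : ℕ // k ∈ Γ ∧ (m*k + d - 1)/d = n} := by
  classical
  have hd0 : 0 < d := hd
  set R := Finset.range (m*q*d + 1) with hR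
  have boundA : ∀ k : ℕ, (k + d - 1)/d = q → k < m*q*d + 1 := by
    intro k hk
    rw [div_eq_iff_aux hd0] at hk
    have h1 : k ≤ q * d := by
      have := hk.2
      have e : (q+1)*d = q*d + d := by ring
      omega
    have h2 : q * d ≤ m * (q*d) := Nat.le_mul_of_pos_left _ hm
    have e2 : m * (q*d) = m*q*d := by ring
    omega
  have boundB : ∀ n, n < m*q + 1 → ∀ k : ℕ, (m*k + d - 1)/d = n → k < m*q*d + 1 := by
    intro n hn k hk
    rw [div_eq_iff_aux hd0] at hk
    have h1 : m*k ≤ n * d := by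
      have := hk.2
      have e : (n+1)*d = n*d + d := by ring
      omega
    have h2 : k ≤ m * k := Nat.le_mul_of_pos_left _ hm
    have h3 : n * d ≤ (m*q) * d := Nat.mul_le_mul_right _ (by omega)
    have e2 : m*q*d = (m*q)*d := by ring
    omega
  have cardA : Nat.card {k : ℕ // k ∈ Γ ∧ (k + d - 1)/d = q}
      = (R.filter fun k => k ∈ Γ ∧ (k + d - 1)/d = q).card := by
    have hset : {k : ℕ | k ∈ Γ ∧ (k + d - 1)/d = q}
        = ↑(R.filter fun k => k ∈ Γ ∧ (k + d - 1)/d = q) := by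
      ext k
      simp only [Set.mem_setOf_eq, Finset.coe_filter, Finset.mem_range, hR]
      constructor
      · intro h; exact ⟨boundA k h.2, h⟩
      · intro h; exact h.2
    calc Nat.card {k : ℕ // k ∈ Γ ∧ (k + d - 1)/d = q}
        = Set.ncard {k : ℕ | k ∈ Γ ∧ (k + d - 1)/d = q} := Nat.card_coe_set_eq _
      _ = _ := by rw [hset, Set.ncard_coe_finset]
  have cardB : ∀ n, n < m*q+1 → Nat.card {k : ℕ // k ∈ Γ ∧ (m*k + d - 1)/d = n}
      = (R.filter fun k => k ∈ Γ ∧ (m*k + d - 1)/d = n).card := by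
    intro n hn
    have hset : {k : ℕ | k ∈ Γ ∧ (m*k + d - 1)/d = n}
        = ↑(R.filter fun k => k ∈ Γ ∧ (m*k + d - 1)/d = n) := by
      ext k
      simp only [Set.mem_setOf_eq, Finset.coe_filter, Finset.mem_range, hR]
      constructor
      · intro h; exact ⟨boundB n hn k h.2, h⟩
      · intro h; exact h.2
    calc Nat.card {k : ℕ // k ∈ Γ ∧ (m*k + d - 1)/d = n}
        = Set.ncard {k : ℕ | k ∈ Γ ∧ (m*k + d - 1)/d = n} := Nat.card_coe_set_eq _
      _ = _ := by rw [hset, Set.ncard_coe_finset]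
  rw [cardA, Finset.sum_congr rfl (fun n hn => cardB n (Finset.mem_Ico.mp hn).2)]
  rw [Finset.card_eq_sum_card_fiberwise
    (f := fun k => (m*k + d - 1)/d) (t := Finset.Ico (m*q+1-m) (m*q+1))
    (fun k hk => by
      simp only [Finset.mem_coe, Finset.mem_filter] at hk
      have h := (key m d q k hm hd).mp hk.2.2
      simp only [Finset.mem_coe, Finset.mem_Ico]
      generalize (m*k + d - 1)/d = t at h ⊢
      omega)]
  refine Finset.sum_congr rfl (fun n hn => ?_)
  rw [Finset.mem_Ico] at hn
  congr 1
  ext k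
  simp only [Finset.mem_filter, Finset.filter_filter]
  constructor
  · rintro ⟨hkR, ⟨hkΓ, -⟩, hfk⟩
    exact ⟨hkR, hkΓ, hfk⟩
  · rintro ⟨hkR, hkΓ, hfk⟩
    refine ⟨hkR, ⟨hkΓ, ?_⟩, hfk⟩
    rw [key m d q k hm hd, hfk]
    omega


/-- For `m, d ≥ 1` and `Γ ⊆ ℕ`, with `η(t) = Σ_{k∈Γ} t^{⌈k/d⌉}`,
`χ(t) = Σ_{k∈Γ} t^{⌈mk/d⌉}` and `ψ(t) = χ(t)·(1 + t + ⋯ + t^{m−1})`, one has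
`η(t^m) = (1/m)·Σ_{ξ^m=1} ψ(ξt)` (stated coefficientwise: the `N`-th coefficient of
`η(t^m)` is `coeff_{N/m} η` if `m ∣ N` and `0` otherwise, while the `N`-th coefficient of
`ψ(ξt)` is `ξ^N · coeff_N ψ`).  Here `⌈k/d⌉ = (k+d−1)/d` in natural division. -/
theorem eta_of_tm_eq_avg_psi (m d : ℕ) (hm : 1 ≤ m) (hd : 1 ≤ d) (Γ : Set ℕ)
    (η χ ψ : PowerSeries ℂ)
    (hη : η = PowerSeries.mk fun N => (Nat.card {k : ℕ // k ∈ Γ ∧ (k + d - 1) / d = N} : ℂ))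
    (hχ : χ = PowerSeries.mk fun N => (Nat.card {k : ℕ // k ∈ Γ ∧ (m * k + d - 1) / d = N} : ℂ))
    (hψ : ψ = χ * ∑ j ∈ Finset.range m, (PowerSeries.X : PowerSeries ℂ) ^ j) :
    ∀ N : ℕ,
      (if m ∣ N then PowerSeries.coeff (N / m) η else 0) =
        (m : ℂ)⁻¹ *
          ((Polynomial.nthRoots m (1 : ℂ)).map fun ξ => ξ ^ N * PowerSeries.coeff N ψ).sum := by
  intro N
  classical
  have hsum : ((Polynomial.nthRoots m (1 : ℂ)).map fun ξ => ξ ^ N * PowerSeries.coeff N ψ).sum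
      = (if m ∣ N then (m:ℂ) else 0) * PowerSeries.coeff N ψ := by
    rw [Multiset.sum_map_mul_right, rootsum m N hm]
  rw [hsum]
  by_cases hdvd : m ∣ N
  · rw [if_pos hdvd, if_pos hdvd, ← mul_assoc,
      inv_mul_cancel₀ (Nat.cast_ne_zero.mpr (by omega : m ≠ 0)), one_mul]
    -- compute coeff N ψ
    have hS : ∀ t : ℕ, PowerSeries.coeff t (∑ j ∈ Finset.range m, (X : PowerSeries ℂ) ^ j)
        = if t < m then 1 else 0 := by
      intro t
      rw [map_sum]
      simp only [coeff_X_pow]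
      rw [Finset.sum_ite_eq (Finset.range m) t (fun _ => (1:ℂ))]
      simp [Finset.mem_range]
    have hcψ : PowerSeries.coeff N ψ = ∑ n ∈ Finset.Ico (N+1-m) (N+1), PowerSeries.coeff n χ := by
      rw [hψ, PowerSeries.coeff_mul,
        Finset.Nat.sum_antidiagonal_eq_sum_range_succ
          (fun i j => PowerSeries.coeff i χ
            * PowerSeries.coeff j (∑ j ∈ Finset.range m, (X : PowerSeries ℂ) ^ j)) N]
      have : ∀ i ∈ Finset.range (N+1),
          PowerSeries.coeff i χ
            * PowerSeries.coeff (N - i) (∑ j ∈ Finset.range m, (X : PowerSeries ℂ) ^ j)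
          = if N - i < m then PowerSeries.coeff i χ else 0 := by
        intro i _
        rw [hS]
        split_ifs <;> simp
      rw [Finset.sum_congr rfl this, ← Finset.sum_filter]
      apply Finset.sum_congr _ (fun _ _ => rfl)
      ext i
      simp only [Finset.mem_filter, Finset.mem_range, Finset.mem_Ico]
      omega
    obtain ⟨q, rfl⟩ := hdvd
    rw [Nat.mul_div_cancel_left q (by omega : 0 < m)]
    rw [hcψ, hη, coeff_mk]
    have : ∀ n ∈ Finset.Ico (m*q+1-m) (m*q+1),
        PowerSeries.coeff n χ = (Nat.card {k : ℕ // k ∈ Γ ∧ (m * k + d - 1) / d = n} : ℂ) := by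
      intro n _
      rw [hχ, coeff_mk]
    rw [Finset.sum_congr rfl this, ← Nat.cast_sum]
    exact_mod_cast congrArg (fun x : ℕ => (x:ℂ)) (count_split m d q hm hd Γ)
  · rw [if_neg hdvd, if_neg hdvd, zero_mul, mul_zero]
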